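/- Let a, σ > 0, b ≥ 0, τ > 0, T ∈ ℝ, and let w ∈ [0, (k(0)−a)/σ²) where k(x) := √(a² + 2(1+b·x)·σ²). Let (φⱼ)ⱼ≥₀ denote the solution of the recursive delayed Riccati system with final datum w, writing φⱼ(t,T;w) to display the dependence on w. Then for every j ≥ 0 and every t ∈ [T−(j+1)τ, T−jτ], the function w ↦ φⱼ(t,T;w) has a right derivative at every point w of [0, (k(0)−a)/σ²). -/

import Mathlib

/-- k(x) := √(a² + 2(1+b·x)·σ²). -/
noncomputable def kfun (a b σ x : ℝ) : ℝ := Real.sqrt (a ^ 2 + 2 * (1 + b * x) * σ ^ 2)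

/-- The domain [T−(j+1)τ, T−jτ] of the j-th component of the recursive delayed
Riccati system. -/
def riccatiDom (T τ : ℝ) (j : ℕ) : Set ℝ :=
  Set.Icc (T - ((j : ℝ) + 1) * τ) (T - (j : ℝ) * τ)

/-- The recursive delayed Riccati system with delay τ, horizon T and final datum w. -/
def DelayedRiccatiSol (a b σ τ T w : ℝ) (φ : ℕ → ℝ → ℝ) : Prop :=
  φ 0 T = w ∧
  (∀ t ∈ riccatiDom T τ 0, HasDerivWithinAt (φ 0)
    (σ ^ 2 / 2 * (φ 0 t) ^ 2 + a * φ 0 t - 1) (riccatiDom T τ 0) t) ∧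
  (∀ j : ℕ, φ (j + 1) (T - ((j : ℝ) + 1) * τ) = φ j (T - ((j : ℝ) + 1) * τ)) ∧
  (∀ j : ℕ, ∀ t ∈ riccatiDom T τ (j + 1), HasDerivWithinAt (φ (j + 1))
    (σ ^ 2 / 2 * (φ (j + 1) t) ^ 2 + a * φ (j + 1) t - 1 - b * φ j (t + τ))
    (riccatiDom T τ (j + 1)) t)

open Set

/-- Backward comparison: if `u β ≤ 0` and `u' t ≥ -K * u t` wherever `u t > 0`,
then `u ≤ 0` on all of `[α, β]`. -/
lemma comparison_aux {α β K : ℝ} (hK : 0 ≤ K) {u u' : ℝ → ℝ}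
    (hd : ∀ t ∈ Set.Icc α β, HasDerivWithinAt u (u' t) (Set.Icc α β) t)
    (hβ : u β ≤ 0)
    (hcomp : ∀ t ∈ Set.Icc α β, 0 < u t → -K * u t ≤ u' t) :
    ∀ t ∈ Set.Icc α β, u t ≤ 0 := by
  have hc : ContinuousOn u (Set.Icc α β) := fun t ht => (hd t ht).continuousWithinAt
  by_contra hcon
  push_neg at hcon
  obtain ⟨t1, ht1, ht1pos⟩ := hcon
  have ht1β : t1 < β := by
    rcases lt_or_eq_of_le ht1.2 with h | h
    · exact h
    · exfalso; rw [h] at ht1pos; linarith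
  -- the set where u ≤ 0 on [t1, β]
  set S : Set ℝ := Icc t1 β ∩ u ⁻¹' (Iic 0) with hS
  have hSclosed : IsClosed S :=
    ContinuousOn.preimage_isClosed_of_isClosed
      (hc.mono (Icc_subset_Icc ht1.1 le_rfl)) isClosed_Icc isClosed_Iic
  have hSne : S.Nonempty := ⟨β, ⟨le_of_lt ht1β, le_rfl⟩, hβ⟩
  have hSbdd : BddBelow S := ⟨t1, fun x hx => hx.1.1⟩
  set t0 := sInf S with ht0def
  have ht0S : t0 ∈ S := hSclosed.csInf_mem hSne hSbdd
  have ht0mem : t0 ∈ Icc α β := ⟨le_trans ht1.1 ht0S.1.1, ht0S.1.2⟩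
  have hpos : ∀ t ∈ Ico t1 t0, 0 < u t := by
    intro t ht
    by_contra hle
    push_neg at hle
    have : t ∈ S := ⟨⟨ht.1, le_trans (le_of_lt ht.2) ht0S.1.2⟩, hle⟩
    exact absurd (csInf_le hSbdd this) (not_le.mpr ht.2)
  have ht1t0 : t1 < t0 := by
    rcases lt_or_eq_of_le ht0S.1.1 with h | h
    · exact h
    · exfalso; rw [← h] at ht0S; have := ht0S.2; simp at this; linarith
  -- u t0 = 0
  have hu0 : u t0 = 0 := by
    have hle : u t0 ≤ 0 := ht0S.2
    have hge : 0 ≤ u t0 := by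
      have hcw : ContinuousWithinAt u (Ico t1 t0) t0 :=
        (hc t0 ht0mem).mono (fun x hx => ⟨le_trans ht1.1 hx.1, le_trans (le_of_lt hx.2) ht0mem.2⟩)
      have hne : (nhdsWithin t0 (Ico t1 t0)).NeBot := right_nhdsWithin_Ico_neBot ht1t0
      exact ge_of_tendsto hcw (Filter.eventually_of_mem self_mem_nhdsWithin
        (fun t ht => le_of_lt (hpos t ht)))
    linarith
  -- v = u * exp(K t) is monotone on [t1, t0]
  set v : ℝ → ℝ := fun t => u t * Real.exp (K * t) with hv
  have hmono : MonotoneOn v (Icc t1 t0) := by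
    apply monotoneOn_of_deriv_nonneg (convex_Icc t1 t0)
    · exact ContinuousOn.mul (hc.mono (Icc_subset_Icc ht1.1 ht0S.1.2))
        (Real.continuous_exp.comp (continuous_const.mul continuous_id)).continuousOn
    · intro t ht
      rw [interior_Icc] at ht
      have htm : t ∈ Icc α β := ⟨le_trans ht1.1 (le_of_lt ht.1), le_trans (le_of_lt ht.2) ht0mem.2⟩
      have hda : HasDerivAt u (u' t) t := by
        apply (hd t htm).hasDerivAt
        exact Icc_mem_nhds (lt_of_le_of_lt ht1.1 ht.1) (lt_of_lt_of_le ht.2 ht0mem.2)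
      exact ((hda.mul ((Real.hasDerivAt_exp (K*t)).comp t
        ((hasDerivAt_id t).const_mul K))).differentiableAt).differentiableWithinAt
    · intro t ht
      rw [interior_Icc] at ht
      have htm : t ∈ Icc α β := ⟨le_trans ht1.1 (le_of_lt ht.1), le_trans (le_of_lt ht.2) ht0mem.2⟩
      have hda : HasDerivAt u (u' t) t := by
        apply (hd t htm).hasDerivAt
        exact Icc_mem_nhds (lt_of_le_of_lt ht1.1 ht.1) (lt_of_lt_of_le ht.2 ht0mem.2)
      have hde : HasDerivAt (fun s => Real.exp (K * s)) (K * Real.exp (K * t)) t := by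
        have := (Real.hasDerivAt_exp (K*t)).comp t ((hasDerivAt_id t).const_mul K)
        simpa [mul_comm, Function.comp_def] using this
      have hdv : HasDerivAt v (u' t * Real.exp (K * t) + u t * (K * Real.exp (K * t))) t :=
        hda.mul hde
      rw [hdv.deriv]
      have hut : 0 < u t := hpos t ⟨le_of_lt ht.1, ht.2⟩
      have := hcomp t htm hut
      have hexp : 0 < Real.exp (K * t) := Real.exp_pos _
      nlinarith
  have := hmono ⟨le_rfl, le_of_lt ht1t0⟩ ⟨le_of_lt ht1t0, le_rfl⟩ (le_of_lt ht1t0)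
  have hv0 : v t0 = 0 := by simp [hv, hu0]
  have hv1 : 0 < v t1 := mul_pos ht1pos (Real.exp_pos _)
  rw [hv0] at this; linarith

-- domain facts
lemma riccatiDom_eq (T τ : ℝ) (j : ℕ) :
    riccatiDom T τ j = Set.Icc (T - ((j : ℝ) + 1) * τ) (T - (j : ℝ) * τ) := rfl

lemma riccatiDom_right_mem (T τ : ℝ) (hτ : 0 < τ) (j : ℕ) :
    T - (j : ℝ) * τ ∈ riccatiDom T τ j := by
  constructor <;> nlinarith [hτ.le]

lemma riccatiDom_left_mem (T τ : ℝ) (hτ : 0 < τ) (j : ℕ) :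
    T - ((j : ℝ) + 1) * τ ∈ riccatiDom T τ j := by
  constructor <;> nlinarith [hτ.le]

lemma riccatiDom_left_mem_prev (T τ : ℝ) (hτ : 0 < τ) (j : ℕ) :
    T - ((j : ℝ) + 1) * τ ∈ riccatiDom T τ j := riccatiDom_left_mem T τ hτ j

lemma riccatiDom_shift (T τ : ℝ) (j : ℕ) {t : ℝ} (ht : t ∈ riccatiDom T τ (j + 1)) :
    t + τ ∈ riccatiDom T τ j := by
  obtain ⟨h1, h2⟩ := ht
  push_cast at h1 h2 ⊢
  constructor <;> [linarith; linarith]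

/-- uniform bound on a continuous function over a `riccatiDom`. -/
lemma exists_bound_dom (T τ : ℝ) (hτ : 0 < τ) (j : ℕ) {f : ℝ → ℝ}
    (hf : ContinuousOn f (riccatiDom T τ j)) :
    ∃ C : ℝ, 0 ≤ C ∧ ∀ t ∈ riccatiDom T τ j, |f t| ≤ C := by
  obtain ⟨C, hC⟩ := isCompact_Icc.exists_bound_of_continuousOn hf
  refine ⟨C, ?_, fun t ht => by simpa [Real.norm_eq_abs] using hC t ht⟩
  have := hC _ (riccatiDom_right_mem T τ hτ j)
  simpa [Real.norm_eq_abs] using (abs_nonneg _).trans this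


lemma riccati_mono (a b σ τ T : ℝ) (ha : 0 < a) (hσ : 0 < σ) (hb : 0 ≤ b) (hτ : 0 < τ)
    (φ : ℝ → ℕ → ℝ → ℝ)
    (hφ : ∀ w ∈ Set.Ico (0 : ℝ) ((kfun a b σ 0 - a) / σ ^ 2),
      DelayedRiccatiSol a b σ τ T w (φ w)) :
    ∀ j : ℕ, ∀ w1 ∈ Set.Ico (0 : ℝ) ((kfun a b σ 0 - a) / σ ^ 2),
      ∀ w2 ∈ Set.Ico (0 : ℝ) ((kfun a b σ 0 - a) / σ ^ 2), w1 ≤ w2 →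
      ∀ t ∈ riccatiDom T τ j, φ w1 j t ≤ φ w2 j t := by
  intro j
  induction j with
  | zero =>
    intro w1 hw1 w2 hw2 hle t ht
    obtain ⟨hv1, hd1, -, -⟩ := hφ w1 hw1
    obtain ⟨hv2, hd2, -, -⟩ := hφ w2 hw2
    obtain ⟨C1, hC1n, hC1⟩ := exists_bound_dom T τ hτ 0
      (fun s hs => (hd1 s hs).continuousWithinAt)
    obtain ⟨C2, hC2n, hC2⟩ := exists_bound_dom T τ hτ 0
      (fun s hs => (hd2 s hs).continuousWithinAt)
    have hdomeq : riccatiDom T τ 0 = Set.Icc (T - τ) T := by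
      rw [riccatiDom_eq]; norm_num
    rw [hdomeq] at hd1 hd2 hC1 hC2 ht
    have hK : (0:ℝ) ≤ σ^2/2*(C1+C2) + a := by positivity
    have key := comparison_aux (K := σ^2/2*(C1+C2) + a) hK
      (u := fun t => φ w1 0 t - φ w2 0 t)
      (u' := fun t => (σ ^ 2 / 2 * (φ w1 0 t) ^ 2 + a * φ w1 0 t - 1)
        - (σ ^ 2 / 2 * (φ w2 0 t) ^ 2 + a * φ w2 0 t - 1))
      (α := T - τ) (β := T)
      (fun s hs => ((hd1 s hs).sub (hd2 s hs)))
      (by show φ w1 0 T - φ w2 0 T ≤ 0; rw [hv1, hv2]; linarith)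
      (by
        intro s hs hpos
        have hpos' : 0 < φ w1 0 s - φ w2 0 s := hpos
        have hb1 := abs_le.1 (hC1 s hs)
        have hb2 := abs_le.1 (hC2 s hs)
        show -(σ^2/2*(C1+C2) + a) * (φ w1 0 s - φ w2 0 s) ≤ _
        have hmain : 0 ≤ σ^2/2 * ((φ w1 0 s - φ w2 0 s) *
            (φ w1 0 s + φ w2 0 s + C1 + C2)) := by
          apply mul_nonneg (by positivity)
          apply mul_nonneg hpos'.le
          linarith [hb1.1, hb2.1]
        nlinarith [mul_pos ha hpos'])
    have := key t ht
    linarith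
  | succ j ih =>
    intro w1 hw1 w2 hw2 hle t ht
    obtain ⟨-, -, hm1, hd1'⟩ := hφ w1 hw1
    obtain ⟨-, -, hm2, hd2'⟩ := hφ w2 hw2
    have hd1 := hd1' j
    have hd2 := hd2' j
    obtain ⟨C1, hC1n, hC1⟩ := exists_bound_dom T τ hτ (j+1)
      (fun s hs => (hd1 s hs).continuousWithinAt)
    obtain ⟨C2, hC2n, hC2⟩ := exists_bound_dom T τ hτ (j+1)
      (fun s hs => (hd2 s hs).continuousWithinAt)
    have hshift : ∀ s ∈ riccatiDom T τ (j+1), φ w1 j (s + τ) ≤ φ w2 j (s + τ) :=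
      fun s hs => ih w1 hw1 w2 hw2 hle (s + τ) (riccatiDom_shift T τ j hs)
    have hdomeq : riccatiDom T τ (j+1)
        = Set.Icc (T - ((j:ℝ) + 1 + 1) * τ) (T - ((j:ℝ) + 1) * τ) := by
      rw [riccatiDom_eq]; push_cast; ring_nf
    rw [hdomeq] at hd1 hd2 hC1 hC2 ht hshift
    have hK : (0:ℝ) ≤ σ^2/2*(C1+C2) + a := by positivity
    have key := comparison_aux (K := σ^2/2*(C1+C2) + a) hK
      (u := fun t => φ w1 (j+1) t - φ w2 (j+1) t)
      (u' := fun t => (σ ^ 2 / 2 * (φ w1 (j+1) t) ^ 2 + a * φ w1 (j+1) t - 1 - b * φ w1 j (t+τ))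
        - (σ ^ 2 / 2 * (φ w2 (j+1) t) ^ 2 + a * φ w2 (j+1) t - 1 - b * φ w2 j (t+τ)))
      (α := T - ((j:ℝ) + 1 + 1) * τ) (β := T - ((j:ℝ) + 1) * τ)
      (fun s hs => ((hd1 s hs).sub (hd2 s hs)))
      (by
        show φ w1 (j+1) (T - ((j:ℝ)+1)*τ) - φ w2 (j+1) (T - ((j:ℝ)+1)*τ) ≤ 0
        rw [hm1 j, hm2 j]
        have := ih w1 hw1 w2 hw2 hle _ (riccatiDom_left_mem T τ hτ j)
        linarith)
      (by
        intro s hs hpos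
        have hpos' : 0 < φ w1 (j+1) s - φ w2 (j+1) s := hpos
        have hb1 := abs_le.1 (hC1 s hs)
        have hb2 := abs_le.1 (hC2 s hs)
        have hprev := hshift s hs
        show -(σ^2/2*(C1+C2) + a) * (φ w1 (j+1) s - φ w2 (j+1) s) ≤ _
        have hmain : 0 ≤ σ^2/2 * ((φ w1 (j+1) s - φ w2 (j+1) s) *
            (φ w1 (j+1) s + φ w2 (j+1) s + C1 + C2)) := by
          apply mul_nonneg (by positivity)
          apply mul_nonneg hpos'.le
          linarith [hb1.1, hb2.1]
        have hforce : 0 ≤ b * (φ w2 j (s+τ) - φ w1 j (s+τ)) :=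
          mul_nonneg hb (by linarith)
        nlinarith [mul_pos ha hpos'])
    have := key t ht
    linarith

set_option maxHeartbeats 1000000 in
lemma riccati_concave (a b σ τ T : ℝ) (ha : 0 < a) (hσ : 0 < σ) (hb : 0 ≤ b) (hτ : 0 < τ)
    (φ : ℝ → ℕ → ℝ → ℝ)
    (hφ : ∀ w ∈ Set.Ico (0 : ℝ) ((kfun a b σ 0 - a) / σ ^ 2),
      DelayedRiccatiSol a b σ τ T w (φ w)) :
    ∀ j : ℕ, ∀ w1 ∈ Set.Ico (0 : ℝ) ((kfun a b σ 0 - a) / σ ^ 2),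
      ∀ w2 ∈ Set.Ico (0 : ℝ) ((kfun a b σ 0 - a) / σ ^ 2),
      ∀ p : ℝ, 0 ≤ p → p ≤ 1 →
      ∀ t ∈ riccatiDom T τ j,
        p * φ w1 j t + (1 - p) * φ w2 j t ≤ φ (p * w1 + (1 - p) * w2) j t := by
  have hmem : ∀ w1 ∈ Set.Ico (0 : ℝ) ((kfun a b σ 0 - a) / σ ^ 2),
      ∀ w2 ∈ Set.Ico (0 : ℝ) ((kfun a b σ 0 - a) / σ ^ 2), ∀ p : ℝ, 0 ≤ p → p ≤ 1 →
      p * w1 + (1 - p) * w2 ∈ Set.Ico (0 : ℝ) ((kfun a b σ 0 - a) / σ ^ 2) := by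
    intro w1 hw1 w2 hw2 p hp hp1
    constructor
    · have := mul_nonneg hp hw1.1
      have := mul_nonneg (by linarith : (0:ℝ) ≤ 1 - p) hw2.1
      linarith
    · rcases eq_or_lt_of_le hp with h0 | h0
      · rw [← h0]; simpa using hw2.2
      · have h1 := mul_pos h0 (sub_pos.2 hw1.2)
        have h2 := mul_nonneg (by linarith : (0:ℝ) ≤ 1 - p) (sub_nonneg.2 hw2.2.le)
        nlinarith
  intro j
  induction j with
  | zero =>
    intro w1 hw1 w2 hw2 p hp hp1 t ht
    have hw3 := hmem w1 hw1 w2 hw2 p hp hp1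
    obtain ⟨hv1, hd1, -, -⟩ := hφ w1 hw1
    obtain ⟨hv2, hd2, -, -⟩ := hφ w2 hw2
    obtain ⟨hv3, hd3, -, -⟩ := hφ _ hw3
    obtain ⟨C1, hC1n, hC1⟩ := exists_bound_dom T τ hτ 0
      (fun s hs => (hd1 s hs).continuousWithinAt)
    obtain ⟨C2, hC2n, hC2⟩ := exists_bound_dom T τ hτ 0
      (fun s hs => (hd2 s hs).continuousWithinAt)
    obtain ⟨C3, hC3n, hC3⟩ := exists_bound_dom T τ hτ 0
      (fun s hs => (hd3 s hs).continuousWithinAt)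
    have hdomeq : riccatiDom T τ 0 = Set.Icc (T - τ) T := by
      rw [riccatiDom_eq]; norm_num
    rw [hdomeq] at hd1 hd2 hd3 hC1 hC2 hC3 ht
    set w3 := p * w1 + (1 - p) * w2 with hw3def
    have hK : (0:ℝ) ≤ σ^2/2*(C1+C2+C3) + a := by positivity
    have key := comparison_aux (K := σ^2/2*(C1+C2+C3) + a) hK
      (u := fun t => p * φ w1 0 t + (1 - p) * φ w2 0 t - φ w3 0 t)
      (u' := fun t => p * (σ ^ 2 / 2 * (φ w1 0 t) ^ 2 + a * φ w1 0 t - 1)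
        + (1 - p) * (σ ^ 2 / 2 * (φ w2 0 t) ^ 2 + a * φ w2 0 t - 1)
        - (σ ^ 2 / 2 * (φ w3 0 t) ^ 2 + a * φ w3 0 t - 1))
      (α := T - τ) (β := T)
      (fun s hs => (((hd1 s hs).const_mul p).add ((hd2 s hs).const_mul (1-p))).sub (hd3 s hs))
      (by
        show p * φ w1 0 T + (1 - p) * φ w2 0 T - φ w3 0 T ≤ 0
        rw [hv1, hv2, hv3]; linarith)
      (by
        intro s hs hpos
        have hpos' : 0 < p * φ w1 0 s + (1 - p) * φ w2 0 s - φ w3 0 s := hpos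
        have hb1 := abs_le.1 (hC1 s hs)
        have hb2 := abs_le.1 (hC2 s hs)
        have hb3 := abs_le.1 (hC3 s hs)
        show -(σ^2/2*(C1+C2+C3) + a) * (p * φ w1 0 s + (1 - p) * φ w2 0 s - φ w3 0 s) ≤ _
        have hquad : 0 ≤ σ^2/2 * (p * (1 - p) * (φ w1 0 s - φ w2 0 s)^2) :=
          mul_nonneg (by positivity)
            (mul_nonneg (mul_nonneg hp (by linarith)) (sq_nonneg _))
        have hv12 : -(C1 + C2) ≤ p * φ w1 0 s + (1 - p) * φ w2 0 s := by
          have h1 := mul_nonneg hp (by linarith : (0:ℝ) ≤ φ w1 0 s + C1)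
          have h2 := mul_nonneg (by linarith : (0:ℝ) ≤ 1 - p)
            (by linarith : (0:ℝ) ≤ φ w2 0 s + C2)
          have h3 := mul_nonneg (by linarith : (0:ℝ) ≤ 1 - p) hC1n
          have h4 := mul_nonneg hp hC2n
          nlinarith
        have hmain : 0 ≤ (σ^2/2 * ((p * φ w1 0 s + (1 - p) * φ w2 0 s) + φ w3 0 s)
            + a + (σ^2/2*(C1+C2+C3) + a))
            * (p * φ w1 0 s + (1 - p) * φ w2 0 s - φ w3 0 s) := by
          apply mul_nonneg _ hpos'.le
          have hsum : (0:ℝ) ≤ (p * φ w1 0 s + (1 - p) * φ w2 0 s) + φ w3 0 s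
              + (C1 + C2 + C3) := by linarith [hb3.1]
          have := mul_nonneg (by positivity : (0:ℝ) ≤ σ^2/2) hsum
          linarith
        linarith [hquad, hmain])
    have := key t ht
    linarith
  | succ j ih =>
    intro w1 hw1 w2 hw2 p hp hp1 t ht
    have hw3 := hmem w1 hw1 w2 hw2 p hp hp1
    obtain ⟨-, -, hm1, hd1'⟩ := hφ w1 hw1
    obtain ⟨-, -, hm2, hd2'⟩ := hφ w2 hw2
    obtain ⟨-, -, hm3, hd3'⟩ := hφ _ hw3
    have hd1 := hd1' j
    have hd2 := hd2' j
    have hd3 := hd3' j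
    obtain ⟨C1, hC1n, hC1⟩ := exists_bound_dom T τ hτ (j+1)
      (fun s hs => (hd1 s hs).continuousWithinAt)
    obtain ⟨C2, hC2n, hC2⟩ := exists_bound_dom T τ hτ (j+1)
      (fun s hs => (hd2 s hs).continuousWithinAt)
    obtain ⟨C3, hC3n, hC3⟩ := exists_bound_dom T τ hτ (j+1)
      (fun s hs => (hd3 s hs).continuousWithinAt)
    have hshift : ∀ s ∈ riccatiDom T τ (j+1),
        p * φ w1 j (s + τ) + (1 - p) * φ w2 j (s + τ)
          ≤ φ (p * w1 + (1 - p) * w2) j (s + τ) :=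
      fun s hs => ih w1 hw1 w2 hw2 p hp hp1 (s + τ) (riccatiDom_shift T τ j hs)
    have hdomeq : riccatiDom T τ (j+1)
        = Set.Icc (T - ((j:ℝ) + 1 + 1) * τ) (T - ((j:ℝ) + 1) * τ) := by
      rw [riccatiDom_eq]; push_cast; ring_nf
    rw [hdomeq] at hd1 hd2 hd3 hC1 hC2 hC3 ht hshift
    set w3 := p * w1 + (1 - p) * w2 with hw3def
    have hK : (0:ℝ) ≤ σ^2/2*(C1+C2+C3) + a := by positivity
    have key := comparison_aux (K := σ^2/2*(C1+C2+C3) + a) hK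
      (u := fun t => p * φ w1 (j+1) t + (1 - p) * φ w2 (j+1) t - φ w3 (j+1) t)
      (u' := fun t => p * (σ ^ 2 / 2 * (φ w1 (j+1) t) ^ 2 + a * φ w1 (j+1) t - 1 - b * φ w1 j (t+τ))
        + (1 - p) * (σ ^ 2 / 2 * (φ w2 (j+1) t) ^ 2 + a * φ w2 (j+1) t - 1 - b * φ w2 j (t+τ))
        - (σ ^ 2 / 2 * (φ w3 (j+1) t) ^ 2 + a * φ w3 (j+1) t - 1 - b * φ w3 j (t+τ)))
      (α := T - ((j:ℝ) + 1 + 1) * τ) (β := T - ((j:ℝ) + 1) * τ)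
      (fun s hs => (((hd1 s hs).const_mul p).add ((hd2 s hs).const_mul (1-p))).sub (hd3 s hs))
      (by
        show p * φ w1 (j+1) (T - ((j:ℝ)+1)*τ) + (1 - p) * φ w2 (j+1) (T - ((j:ℝ)+1)*τ)
          - φ w3 (j+1) (T - ((j:ℝ)+1)*τ) ≤ 0
        rw [hm1 j, hm2 j, hm3 j]
        have := ih w1 hw1 w2 hw2 p hp hp1 _ (riccatiDom_left_mem T τ hτ j)
        linarith)
      (by
        intro s hs hpos
        have hpos' : 0 < p * φ w1 (j+1) s + (1 - p) * φ w2 (j+1) s - φ w3 (j+1) s := hpos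
        have hb1 := abs_le.1 (hC1 s hs)
        have hb2 := abs_le.1 (hC2 s hs)
        have hb3 := abs_le.1 (hC3 s hs)
        have hprev := hshift s hs
        show -(σ^2/2*(C1+C2+C3) + a) * (p * φ w1 (j+1) s + (1 - p) * φ w2 (j+1) s - φ w3 (j+1) s) ≤ _
        have hquad : 0 ≤ σ^2/2 * (p * (1 - p) * (φ w1 (j+1) s - φ w2 (j+1) s)^2) :=
          mul_nonneg (by positivity)
            (mul_nonneg (mul_nonneg hp (by linarith)) (sq_nonneg _))
        have hv12 : -(C1 + C2) ≤ p * φ w1 (j+1) s + (1 - p) * φ w2 (j+1) s := by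
          have h1 := mul_nonneg hp (by linarith : (0:ℝ) ≤ φ w1 (j+1) s + C1)
          have h2 := mul_nonneg (by linarith : (0:ℝ) ≤ 1 - p)
            (by linarith : (0:ℝ) ≤ φ w2 (j+1) s + C2)
          have h3 := mul_nonneg (by linarith : (0:ℝ) ≤ 1 - p) hC1n
          have h4 := mul_nonneg hp hC2n
          nlinarith
        have hmain : 0 ≤ (σ^2/2 * ((p * φ w1 (j+1) s + (1 - p) * φ w2 (j+1) s) + φ w3 (j+1) s)
            + a + (σ^2/2*(C1+C2+C3) + a))
            * (p * φ w1 (j+1) s + (1 - p) * φ w2 (j+1) s - φ w3 (j+1) s) := by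
          apply mul_nonneg _ hpos'.le
          have hsum : (0:ℝ) ≤ (p * φ w1 (j+1) s + (1 - p) * φ w2 (j+1) s) + φ w3 (j+1) s
              + (C1 + C2 + C3) := by linarith [hb3.1]
          have := mul_nonneg (by positivity : (0:ℝ) ≤ σ^2/2) hsum
          linarith
        have hforce : 0 ≤ b * (φ w3 j (s+τ) - (p * φ w1 j (s+τ) + (1 - p) * φ w2 j (s+τ))) :=
          mul_nonneg hb (by linarith)
        linarith [hquad, hmain, hforce])
    have := key t ht
    linarith

set_option maxHeartbeats 1000000 in
lemma riccati_lip (a b σ τ T : ℝ) (ha : 0 < a) (hσ : 0 < σ) (hb : 0 ≤ b) (hτ : 0 < τ)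
    (φ : ℝ → ℕ → ℝ → ℝ)
    (hφ : ∀ w ∈ Set.Ico (0 : ℝ) ((kfun a b σ 0 - a) / σ ^ 2),
      DelayedRiccatiSol a b σ τ T w (φ w)) :
    ∀ j : ℕ, ∀ v1 ∈ Set.Ico (0 : ℝ) ((kfun a b σ 0 - a) / σ ^ 2),
      ∀ v2 ∈ Set.Ico (0 : ℝ) ((kfun a b σ 0 - a) / σ ^ 2), v1 ≤ v2 →
      ∃ M : ℝ, 0 ≤ M ∧ ∀ w1 w2 : ℝ, v1 ≤ w1 → w1 ≤ w2 → w2 ≤ v2 →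
        ∀ t ∈ riccatiDom T τ j, φ w2 j t - φ w1 j t ≤ M * (w2 - w1) := by
  have hmono := riccati_mono a b σ τ T ha hσ hb hτ φ hφ
  have hsub : ∀ w1 w2 : ℝ, ∀ v1 ∈ Set.Ico (0 : ℝ) ((kfun a b σ 0 - a) / σ ^ 2),
      ∀ v2 ∈ Set.Ico (0 : ℝ) ((kfun a b σ 0 - a) / σ ^ 2),
      v1 ≤ w1 → w1 ≤ w2 → w2 ≤ v2 →
      w1 ∈ Set.Ico (0 : ℝ) ((kfun a b σ 0 - a) / σ ^ 2) ∧
      w2 ∈ Set.Ico (0 : ℝ) ((kfun a b σ 0 - a) / σ ^ 2) := by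
    intro w1 w2 v1 hv1 v2 hv2 h1 h2 h3
    exact ⟨⟨le_trans hv1.1 h1, lt_of_le_of_lt (le_trans h2 h3) hv2.2⟩,
      ⟨le_trans hv1.1 (le_trans h1 h2), lt_of_le_of_lt h3 hv2.2⟩⟩
  intro j
  induction j with
  | zero =>
    intro v1 hv1 v2 hv2 hv12
    obtain ⟨-, hdl, -, -⟩ := hφ v1 hv1
    obtain ⟨-, hdu, -, -⟩ := hφ v2 hv2
    obtain ⟨Cl, hCln, hCl⟩ := exists_bound_dom T τ hτ 0
      (fun s hs => (hdl s hs).continuousWithinAt)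
    obtain ⟨Cu, hCun, hCu⟩ := exists_bound_dom T τ hτ 0
      (fun s hs => (hdu s hs).continuousWithinAt)
    set C := max Cl Cu with hCdef
    have hCn : (0:ℝ) ≤ C := le_trans hCln (le_max_left _ _)
    -- uniform bound for all w' ∈ [v1, v2]
    have hbound : ∀ w' : ℝ, v1 ≤ w' → w' ≤ v2 → ∀ s ∈ riccatiDom T τ 0, |φ w' 0 s| ≤ C := by
      intro w' h1 h2 s hs
      obtain ⟨hw1m, hw2m⟩ := hsub w' w' v1 hv1 v2 hv2 h1 le_rfl h2
      have hl := hmono 0 v1 hv1 w' hw1m h1 s hs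
      have hu := hmono 0 w' hw1m v2 hv2 h2 s hs
      have hbl := abs_le.1 (hCl s hs)
      have hbu := abs_le.1 (hCu s hs)
      rw [abs_le]
      constructor
      · calc -C ≤ -Cl := by simp [hCdef]
          _ ≤ φ v1 0 s := hbl.1
          _ ≤ φ w' 0 s := hl
      · calc φ w' 0 s ≤ φ v2 0 s := hu
          _ ≤ Cu := hbu.2
          _ ≤ C := le_max_right _ _
    set K := σ^2 * C + a with hKdef
    have hK : 0 ≤ K := by positivity
    refine ⟨Real.exp (K * τ), (Real.exp_pos _).le, ?_⟩
    intro w1 w2 h1 h2 h3 t ht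
    obtain ⟨hw1m, hw2m⟩ := hsub w1 w2 v1 hv1 v2 hv2 h1 h2 h3
    obtain ⟨hval1, hd1, -, -⟩ := hφ w1 hw1m
    obtain ⟨hval2, hd2, -, -⟩ := hφ w2 hw2m
    set h := w2 - w1 with hhdef
    have hh : 0 ≤ h := by simp [hhdef]; linarith
    have hB1 := fun s hs => hbound w1 h1 (le_trans h2 h3) s hs
    have hB2 := fun s hs => hbound w2 (le_trans h1 h2) h3 s hs
    have hmn := fun s hs => hmono 0 w1 hw1m w2 hw2m h2 s hs
    have hdomeq : riccatiDom T τ 0 = Set.Icc (T - τ) T := by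
      rw [riccatiDom_eq]; norm_num
    rw [hdomeq] at hd1 hd2 hB1 hB2 hmn ht
    have hexp : ∀ s : ℝ, HasDerivAt (fun t => Real.exp (K * (T - t)))
        (-(K * Real.exp (K * (T - s)))) s := by
      intro s
      have h1' : HasDerivAt (fun t : ℝ => K * (T - t)) (-K) s := by
        simpa using ((hasDerivAt_id s).const_sub T).const_mul K
      have := (Real.hasDerivAt_exp (K * (T - s))).comp s h1'
      convert this using 1
      all_goals (try rfl)
      ring
    have key := comparison_aux (K := K) hK
      (u := fun t => (φ w2 0 t - φ w1 0 t) - h * Real.exp (K * (T - t)))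
      (u' := fun t => ((σ ^ 2 / 2 * (φ w2 0 t) ^ 2 + a * φ w2 0 t - 1)
        - (σ ^ 2 / 2 * (φ w1 0 t) ^ 2 + a * φ w1 0 t - 1))
        - h * (-(K * Real.exp (K * (T - t)))))
      (α := T - τ) (β := T)
      (fun s hs => (((hd2 s hs).sub (hd1 s hs)).sub
        (((hexp s).const_mul h).hasDerivWithinAt)))
      (by
        show (φ w2 0 T - φ w1 0 T) - h * Real.exp (K * (T - T)) ≤ 0
        rw [hval1, hval2]
        simp [hhdef])
      (by
        intro s hs hpos
        have hb1 := abs_le.1 (hB1 s hs)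
        have hb2 := abs_le.1 (hB2 s hs)
        have hΔ := hmn s hs
        show -K * ((φ w2 0 s - φ w1 0 s) - h * Real.exp (K * (T - s))) ≤ _
        have hmain : 0 ≤ (σ^2/2 * (φ w2 0 s + φ w1 0 s) + a + K) * (φ w2 0 s - φ w1 0 s) := by
          apply mul_nonneg _ (by linarith)
          have hsum : (0:ℝ) ≤ φ w2 0 s + φ w1 0 s + 2 * C := by linarith [hb1.1, hb2.1]
          have := mul_nonneg (by positivity : (0:ℝ) ≤ σ^2/2) hsum
          simp only [hKdef]
          nlinarith
        linarith [hmain])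
    have hkey := key t ht
    have hle : Real.exp (K * (T - t)) ≤ Real.exp (K * τ) := by
      apply Real.exp_le_exp.2
      apply mul_le_mul_of_nonneg_left _ hK
      have := ht.1
      linarith
    have := mul_le_mul_of_nonneg_left hle hh
    simp only [hhdef] at *
    linarith
  | succ j ih =>
    intro v1 hv1 v2 hv2 hv12
    obtain ⟨M', hM'n, hM'⟩ := ih v1 hv1 v2 hv2 hv12
    obtain ⟨-, -, -, hdl'⟩ := hφ v1 hv1
    obtain ⟨-, -, -, hdu'⟩ := hφ v2 hv2
    obtain ⟨Cl, hCln, hCl⟩ := exists_bound_dom T τ hτ (j+1)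
      (fun s hs => (hdl' j s hs).continuousWithinAt)
    obtain ⟨Cu, hCun, hCu⟩ := exists_bound_dom T τ hτ (j+1)
      (fun s hs => (hdu' j s hs).continuousWithinAt)
    set C := max Cl Cu with hCdef
    have hCn : (0:ℝ) ≤ C := le_trans hCln (le_max_left _ _)
    have hbound : ∀ w' : ℝ, v1 ≤ w' → w' ≤ v2 → ∀ s ∈ riccatiDom T τ (j+1),
        |φ w' (j+1) s| ≤ C := by
      intro w' h1 h2 s hs
      obtain ⟨hw1m, hw2m⟩ := hsub w' w' v1 hv1 v2 hv2 h1 le_rfl h2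
      have hl := hmono (j+1) v1 hv1 w' hw1m h1 s hs
      have hu := hmono (j+1) w' hw1m v2 hv2 h2 s hs
      have hbl := abs_le.1 (hCl s hs)
      have hbu := abs_le.1 (hCu s hs)
      rw [abs_le]
      exact ⟨by calc -C ≤ -Cl := by simp [hCdef]
          _ ≤ φ v1 (j+1) s := hbl.1
          _ ≤ φ w' (j+1) s := hl,
        by calc φ w' (j+1) s ≤ φ v2 (j+1) s := hu
          _ ≤ Cu := hbu.2
          _ ≤ C := le_max_right _ _⟩
    set K := σ^2 * C + a with hKdef
    have hK : 0 ≤ K := by positivity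
    refine ⟨(M' + b * M' * τ) * Real.exp (K * τ), by positivity, ?_⟩
    intro w1 w2 h1 h2 h3 t ht
    obtain ⟨hw1m, hw2m⟩ := hsub w1 w2 v1 hv1 v2 hv2 h1 h2 h3
    obtain ⟨-, -, hmat1, hd1'⟩ := hφ w1 hw1m
    obtain ⟨-, -, hmat2, hd2'⟩ := hφ w2 hw2m
    have hd1 := hd1' j
    have hd2 := hd2' j
    set h := w2 - w1 with hhdef
    have hh : 0 ≤ h := by simp [hhdef]; linarith
    have hB1 := fun s hs => hbound w1 h1 (le_trans h2 h3) s hs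
    have hB2 := fun s hs => hbound w2 (le_trans h1 h2) h3 s hs
    have hmn := fun s hs => hmono (j+1) w1 hw1m w2 hw2m h2 s hs
    have hprevlip : ∀ s ∈ riccatiDom T τ (j+1),
        φ w2 j (s + τ) - φ w1 j (s + τ) ≤ M' * h :=
      fun s hs => hM' w1 w2 h1 h2 h3 (s + τ) (riccatiDom_shift T τ j hs)
    -- matching value bound
    set β := T - ((j:ℝ) + 1) * τ with hβdef
    have hmatch : φ w2 (j+1) β - φ w1 (j+1) β ≤ M' * h := by
      rw [hmat1 j, hmat2 j]
      exact hM' w1 w2 h1 h2 h3 _ (riccatiDom_left_mem T τ hτ j)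
    have hdomeq : riccatiDom T τ (j+1)
        = Set.Icc (T - ((j:ℝ) + 1 + 1) * τ) β := by
      rw [riccatiDom_eq, hβdef]; push_cast; ring_nf
    rw [hdomeq] at hd1 hd2 hB1 hB2 hmn ht hprevlip
    -- derivative of the barrier ρ(t) = (M' + bM'(β - t)) exp(K(β - t))
    have hρ : ∀ s : ℝ, HasDerivAt
        (fun t => (M' + b * M' * (β - t)) * Real.exp (K * (β - t)))
        (-(b * M') * Real.exp (K * (β - s))
          + (M' + b * M' * (β - s)) * (-(K * Real.exp (K * (β - s))))) s := by
      intro s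
      have hP : HasDerivAt (fun t : ℝ => M' + b * M' * (β - t)) (-(b * M')) s := by
        simpa using (((hasDerivAt_id s).const_sub β).const_mul (b * M')).const_add M'
      have hE : HasDerivAt (fun t : ℝ => Real.exp (K * (β - t)))
          (-(K * Real.exp (K * (β - s)))) s := by
        have h1' : HasDerivAt (fun t : ℝ => K * (β - t)) (-K) s := by
          simpa using ((hasDerivAt_id s).const_sub β).const_mul K
        have := (Real.hasDerivAt_exp (K * (β - s))).comp s h1'
        convert this using 1
        all_goals (try rfl)
        ring
      exact hP.mul hE
    have key := comparison_aux (K := K) hK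
      (u := fun t => (φ w2 (j+1) t - φ w1 (j+1) t)
        - h * ((M' + b * M' * (β - t)) * Real.exp (K * (β - t))))
      (u' := fun t => ((σ ^ 2 / 2 * (φ w2 (j+1) t) ^ 2 + a * φ w2 (j+1) t - 1 - b * φ w2 j (t+τ))
        - (σ ^ 2 / 2 * (φ w1 (j+1) t) ^ 2 + a * φ w1 (j+1) t - 1 - b * φ w1 j (t+τ)))
        - h * (-(b * M') * Real.exp (K * (β - t))
          + (M' + b * M' * (β - t)) * (-(K * Real.exp (K * (β - t))))))
      (α := T - ((j:ℝ) + 1 + 1) * τ) (β := β)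
      (fun s hs => (((hd2 s hs).sub (hd1 s hs)).sub
        (((hρ s).const_mul h).hasDerivWithinAt)))
      (by
        show (φ w2 (j+1) β - φ w1 (j+1) β)
          - h * ((M' + b * M' * (β - β)) * Real.exp (K * (β - β))) ≤ 0
        have : (M' + b * M' * (β - β)) * Real.exp (K * (β - β)) = M' := by
          simp
        rw [this]
        linarith [hmatch])
      (by
        clear_value C K β h
        intro s hs hpos
        have hb1 := abs_le.1 (hB1 s hs)
        have hb2 := abs_le.1 (hB2 s hs)
        have hΔ := hmn s hs
        have hplip := hprevlip s hs
        have hin : 0 ≤ β - s := by linarith [hs.2]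
        have hE1 : 1 ≤ Real.exp (K * (β - s)) := by
          rw [← Real.exp_zero]
          exact Real.exp_le_exp.2 (by positivity)
        show -K * ((φ w2 (j+1) s - φ w1 (j+1) s)
          - h * ((M' + b * M' * (β - s)) * Real.exp (K * (β - s))))
          ≤ ((σ ^ 2 / 2 * (φ w2 (j+1) s) ^ 2 + a * φ w2 (j+1) s - 1 - b * φ w2 j (s+τ))
          - (σ ^ 2 / 2 * (φ w1 (j+1) s) ^ 2 + a * φ w1 (j+1) s - 1 - b * φ w1 j (s+τ)))
          - h * (-(b * M') * Real.exp (K * (β - s))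
          + (M' + b * M' * (β - s)) * (-(K * Real.exp (K * (β - s)))))
        have hmain : 0 ≤ (σ^2/2 * (φ w2 (j+1) s + φ w1 (j+1) s) + a + K)
            * (φ w2 (j+1) s - φ w1 (j+1) s) := by
          apply mul_nonneg _ (by linarith)
          have hsum : (0:ℝ) ≤ φ w2 (j+1) s + φ w1 (j+1) s + 2 * C := by
            linarith [hb1.1, hb2.1]
          have := mul_nonneg (by positivity : (0:ℝ) ≤ σ^2/2) hsum
          simp only [hKdef]
          nlinarith
        -- b * (Δ_j shift) ≤ b * M' * h  and  b M' h (E - 1) ≥ 0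
        have hf1 : b * (φ w2 j (s+τ) - φ w1 j (s+τ)) ≤ b * (M' * h) :=
          mul_le_mul_of_nonneg_left hplip hb
        have hf2 : 0 ≤ b * M' * h * (Real.exp (K * (β - s)) - 1) :=
          mul_nonneg (by positivity) (by linarith)
        linarith [hmain, hf1, hf2])
    have hkey := key t ht
    -- bound the barrier by its max
    have hin : 0 ≤ β - t ∧ β - t ≤ τ := by
      constructor
      · linarith [ht.2]
      · have := ht.1; linarith
    have hρbound : (M' + b * M' * (β - t)) * Real.exp (K * (β - t))
        ≤ (M' + b * M' * τ) * Real.exp (K * τ) := by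
      apply mul_le_mul
      · have : b * M' * (β - t) ≤ b * M' * τ :=
          mul_le_mul_of_nonneg_left hin.2 (by positivity)
        linarith
      · exact Real.exp_le_exp.2 (mul_le_mul_of_nonneg_left hin.2 hK)
      · positivity
      · positivity
    have := mul_le_mul_of_nonneg_left hρbound hh
    simp only [hhdef] at *
    linarith

set_option maxHeartbeats 1000000 in
/-- right-differentiability in the final datum w of the solution
φⱼ(t,T;w) of the recursive delayed Riccati system: for every j, every t in the
j-th domain, and every w ∈ [0, (k(0)−a)/σ²), the map w ↦ φⱼ(t,T;w) has a right
derivative at w. -/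
theorem delayed_riccati_right_differentiable_in_w
    (a b σ τ T : ℝ) (ha : 0 < a) (hσ : 0 < σ) (hb : 0 ≤ b) (hτ : 0 < τ)
    (φ : ℝ → ℕ → ℝ → ℝ)
    (hφ : ∀ w ∈ Set.Ico (0 : ℝ) ((kfun a b σ 0 - a) / σ ^ 2),
      DelayedRiccatiSol a b σ τ T w (φ w)) :
    ∀ j : ℕ, ∀ t ∈ riccatiDom T τ j,
      ∀ w ∈ Set.Ico (0 : ℝ) ((kfun a b σ 0 - a) / σ ^ 2),
        ∃ d : ℝ, HasDerivWithinAt (fun w' => φ w' j t) d (Set.Ici w) w := by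
  intro j t ht w hw
  set yp := (kfun a b σ 0 - a) / σ ^ 2 with hypdef
  set δ := (yp - w) / 2 with hδdef
  have hδpos : 0 < δ := by
    have := hw.2
    simp only [hδdef]
    linarith
  have hwmax : w + δ ∈ Set.Ico (0:ℝ) yp := by
    constructor
    · linarith [hw.1]
    · have := hw.2
      simp only [hδdef]
      linarith
  obtain ⟨M, hMn, hM⟩ := riccati_lip a b σ τ T ha hσ hb hτ φ hφ j w hw (w+δ) hwmax
    (by linarith)
  have hconc := riccati_concave a b σ τ T ha hσ hb hτ φ hφ j
  set g : ℝ → ℝ := fun w' => φ w' j t with hgdef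
  -- slope from w
  set sl : ℝ → ℝ := fun h => (g (w + h) - g w) / h with hsldef
  have hmemI : ∀ h : ℝ, 0 ≤ h → h ≤ δ → w + h ∈ Set.Ico (0:ℝ) yp :=
    fun h h0 h1 => ⟨by linarith [hw.1], by linarith [hwmax.2]⟩
  -- antitone property of slopes
  have hanti : ∀ h1 h2 : ℝ, 0 < h1 → h1 ≤ h2 → h2 ≤ δ → sl h2 ≤ sl h1 := by
    intro h1 h2 hh1 hh12 hh2δ
    have hh2 : 0 < h2 := lt_of_lt_of_le hh1 hh12
    have hp : (0:ℝ) ≤ h1 / h2 := by positivity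
    have hp1 : h1 / h2 ≤ 1 := by
      rw [div_le_one hh2]; exact hh12
    have key := hconc (w + h2) (hmemI h2 hh2.le hh2δ) w hw (h1/h2) hp hp1 t ht
    have harg : h1/h2 * (w + h2) + (1 - h1/h2) * w = w + h1 := by
      field_simp
      ring
    rw [harg] at key
    -- key : h1/h2 * g (w+h2) + (1 - h1/h2) * g w ≤ g (w + h1)
    have hmul := mul_le_mul_of_nonneg_right key hh2.le
    have hL : (h1/h2 * φ (w + h2) j t + (1 - h1/h2) * φ w j t) * h2
        = h1 * φ (w + h2) j t + (h2 - h1) * φ w j t := by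
      field_simp
    rw [hL] at hmul
    -- hmul : h1 * g(w+h2) + (h2-h1) * g w ≤ g(w+h1) * h2
    show (g (w + h2) - g w) / h2 ≤ (g (w + h1) - g w) / h1
    rw [div_le_div_iff₀ hh2 hh1]
    simp only [hgdef]
    nlinarith [hmul]
  -- slopes bounded above by M
  have hub : ∀ h : ℝ, 0 < h → h ≤ δ → sl h ≤ M := by
    intro h h0 h1
    have := hM w (w + h) le_rfl (by linarith) (by linarith) t ht
    show (g (w + h) - g w) / h ≤ M
    rw [div_le_iff₀ h0]
    simp only [hgdef]
    have harg : w + h - w = h := by ring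
    calc φ (w + h) j t - φ w j t ≤ M * (w + h - w) := this
      _ = M * h := by rw [harg]
  set S : Set ℝ := sl '' Set.Ioc 0 δ with hSdef
  have hSne : S.Nonempty := ⟨sl δ, δ, ⟨hδpos, le_rfl⟩, rfl⟩
  have hbdd : BddAbove S := by
    refine ⟨M, ?_⟩
    rintro x ⟨h, ⟨h0, h1⟩, rfl⟩
    exact hub h h0 h1
  refine ⟨sSup S, ?_⟩
  rw [hasDerivWithinAt_iff_tendsto_slope]
  rw [Metric.tendsto_nhds]
  intro ε hε
  obtain ⟨x0, hx0S, hx0⟩ := exists_lt_of_lt_csSup hSne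
    (show sSup S - ε < sSup S by linarith)
  obtain ⟨h0, hh0mem, hh0eq⟩ := hx0S
  have hh0pos : 0 < h0 := hh0mem.1
  have hnb : Set.Iio (w + h0) ∈ nhdsWithin w (Set.Ici w \ {w}) :=
    mem_nhdsWithin_of_mem_nhds (Iio_mem_nhds (by linarith))
  filter_upwards [hnb, self_mem_nhdsWithin] with x hx1 hx2
  have hxgt : w < x := lt_of_le_of_ne hx2.1 (Ne.symm hx2.2)
  set h := x - w with hhdef
  have hhpos : 0 < h := by simp [hhdef]; linarith
  have hhlt : h < h0 := by simp [hhdef]; simp at hx1; linarith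
  have hhδ : h ≤ δ := le_trans hhlt.le hh0mem.2
  have hslope : slope g w x = sl h := by
    rw [slope_def_field]
    simp only [hsldef, hhdef]
    have : w + (x - w) = x := by ring
    rw [this]
  have hle : sl h ≤ sSup S := le_csSup hbdd ⟨h, ⟨hhpos, hhδ⟩, rfl⟩
  have hgt : sSup S - ε < sl h := by
    have := hanti h h0 hhpos hhlt.le hh0mem.2
    rw [hh0eq] at this
    linarith
  have hgoal : dist (slope g w x) (sSup S) < ε := by
    rw [hslope, Real.dist_eq, abs_lt]
    constructor <;> linarith
  exact hgoal
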